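/- Let (Ω, F, P) be a probability space with filtration (F_i), T a stopping time with respect to (F_i), and (X_i) a nonnegative stochastic process adapted to (F_i) such that E[X_{i+1} | F_i] ≤ X_i − ε·𝟙_{T>i} pointwise for all i, where ε > 0. Then for every i ∈ ℕ, E[X_i] ≤ E[X_0] − ε · Σ_{j=0}^{i−1} P[T > j]. -/

import Mathlib

open MeasureTheory Filter

/-- For an ε-ranking supermartingale `X` with respect to a stopping time `T`
(valued in `ℕ∞`, possibly infinite), we have
`E[X i] ≤ E[X 0] - ε * ∑_{j=0}^{i-1} P[T > j]` for every `i`. -/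
theorem rsm_expectation_bound
    {Ω : Type*} {m0 : MeasurableSpace Ω} {μ : Measure Ω} [IsProbabilityMeasure μ]
    (ℱ : Filtration ℕ m0) (X : ℕ → Ω → ℝ) (T : Ω → ℕ∞) (ε : ℝ) (hε : 0 < ε)
    (hstop : ∀ i : ℕ, MeasurableSet[ℱ i] {ω | T ω ≤ (i : ℕ∞)})
    (hadapted : Adapted ℱ X)
    (hint : ∀ i, Integrable (X i) μ)
    (hnonneg : ∀ i ω, 0 ≤ X i ω)
    (hdec : ∀ i : ℕ, ∀ ω : Ω,
      (μ[X (i + 1) | ℱ i]) ω ≤ X i ω - ε * Set.indicator {ω | (i : ℕ∞) < T ω} (fun _ => 1) ω) :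
    ∀ i : ℕ, ∫ ω, X i ω ∂μ ≤
      ∫ ω, X 0 ω ∂μ - ε * ∑ j ∈ Finset.range i, (μ {ω | (j : ℕ∞) < T ω}).toReal := by
  have hmeas : ∀ i : ℕ, MeasurableSet {ω | (i : ℕ∞) < T ω} := by
    intro i
    have : {ω | (i : ℕ∞) < T ω} = {ω | T ω ≤ (i : ℕ∞)}ᶜ := by
      ext ω; simp [not_le]
    rw [this]
    exact (ℱ.le i _ (hstop i)).compl
  have hindint : ∀ i : ℕ,
      Integrable (Set.indicator {ω | (i : ℕ∞) < T ω} (fun _ => (1:ℝ))) μ := by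
    intro i
    exact (integrable_const (1:ℝ)).indicator (hmeas i)
  intro i
  induction i with
  | zero => simp
  | succ i ih =>
    have hstep : ∫ ω, X (i + 1) ω ∂μ ≤
        ∫ ω, X i ω ∂μ - ε * (μ {ω | (i : ℕ∞) < T ω}).toReal := by
      have h1 : ∫ ω, X (i + 1) ω ∂μ = ∫ ω, (μ[X (i + 1) | ℱ i]) ω ∂μ :=
        (integral_condExp (ℱ.le i)).symm
      rw [h1]
      have h2 : ∫ ω, (μ[X (i + 1) | ℱ i]) ω ∂μ ≤
          ∫ ω, (X i ω - ε * Set.indicator {ω | (i : ℕ∞) < T ω} (fun _ => 1) ω) ∂μ :=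
        integral_mono integrable_condExp ((hint i).sub ((hindint i).const_mul ε)) (hdec i)
      refine h2.trans_eq ?_
      rw [integral_sub (hint i) ((hindint i).const_mul ε), integral_const_mul,
        integral_indicator_const _ (hmeas i)]
      simp [Measure.real]
    calc ∫ ω, X (i + 1) ω ∂μ
        ≤ ∫ ω, X i ω ∂μ - ε * (μ {ω | (i : ℕ∞) < T ω}).toReal := hstep
      _ ≤ (∫ ω, X 0 ω ∂μ - ε * ∑ j ∈ Finset.range i, (μ {ω | (j : ℕ∞) < T ω}).toReal)
            - ε * (μ {ω | (i : ℕ∞) < T ω}).toReal := by linarith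
      _ = _ := by rw [Finset.sum_range_succ]; ring
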